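/- Let Y₁,…,Yₙ be i.i.d. N(β*,1) with β* = -δ < 0, and consider the (nonrandomized) approximate selective MLE β̂*_n = Ȳ_n - 1/(√n Ȳ_n(√n Ȳ_n + 1)) conditional on {√n Ȳ_n > 0}. Then β̂*_n does not converge in probability to β* under the conditional (selective) law; in fact, liminf_n P(|β̂*_n - β*| > δ/2 | √n Ȳ_n > 0) > 0. -/

import Mathlib

open MeasureTheory ProbabilityTheory Filter
open scoped NNReal ENNReal

set_option maxHeartbeats 1000000

lemma key_bound (δ : ℝ) (hδ : 0 < δ) (n : ℕ) (hn : 1 ≤ n)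
    (hk : Real.exp (-((3*δ+3)⁻¹ * δ * Real.sqrt n)) ≤ 1/2) :
    1/2 ≤ (((gaussianReal (-δ) (1 / (n : NNReal)))[|{y : ℝ | 0 < Real.sqrt n * y}])
      {y : ℝ | δ / 2 <
        |(y - 1 / ((Real.sqrt n * y) * (Real.sqrt n * y + 1))) - (-δ)|}).toReal := by
  have hnR : (1:ℝ) ≤ (n:ℝ) := by exact_mod_cast hn
  set ε : ℝ := (3*δ+3)⁻¹ with hεdef
  have hε : 0 < ε := by positivity
  have hε1 : ε * (3*δ+3) = 1 := inv_mul_cancel₀ (by positivity)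
  have hε3 : ε ≤ 1/3 := by nlinarith
  set r : ℝ := Real.sqrt n with hrdef
  have hr1 : 1 ≤ r := Real.one_le_sqrt.mpr hnR
  have hr0 : 0 < r := lt_of_lt_of_le one_pos hr1
  have hrr : r * r = (n:ℝ) := Real.mul_self_sqrt (by positivity)
  set t : ℝ := ε / r with htdef
  have ht0 : 0 < t := div_pos hε hr0
  have htε : t ≤ ε := div_le_self hε.le hr1
  have hrt : r * t = ε := by rw [htdef]; field_simp
  have hn0 : (n:NNReal) ≠ 0 := Nat.cast_ne_zero.mpr (by omega)
  have hv : (1 / (n:NNReal)) ≠ 0 := by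
    simp only [one_div, ne_eq, inv_eq_zero]
    exact hn0
  set v : ℝ≥0 := 1 / (n:NNReal) with hvdef
  have hvR : (v:ℝ) = ((n:ℝ))⁻¹ := by rw [hvdef]; push_cast; simp
  have hv0 : (0:ℝ) < v := by rw [hvR]; positivity
  set μ := gaussianReal (-δ) v with hμdef
  set f : ℝ → ℝ := gaussianPDFReal (-δ) v with hfdef
  clear_value ε r t
  have happly : ∀ s : Set ℝ, (μ s).toReal = ∫ x in s, f x := by
    intro s
    rw [hμdef, gaussianReal_apply_eq_integral _ hv s,
      ENNReal.toReal_ofReal (integral_nonneg (fun x => gaussianPDFReal_nonneg _ _ _))]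
  -- pointwise bound
  have hpoint : ∀ x : ℝ, 0 ≤ x → f (x + t) ≤ Real.exp (-(ε*δ*r)) * f x := by
    intro x hx
    have hw0 : (0:ℝ) < (v:ℝ) := hv0
    have hw1 : (v:ℝ) * (r*r) = 1 := by rw [hvR, hrr]; field_simp
    have key : (x - (-δ))^2 + 2*δ*t ≤ (x + t - (-δ))^2 := by nlinarith
    have h2' : 2*(v:ℝ)*(ε*δ*r) = 2*δ*t := by
      rw [← hrt]; nlinarith [hw1]
    have hexp : -(x + t - (-δ))^2 / (2*(v:ℝ)) ≤ -(ε*δ*r) + -(x - (-δ))^2 / (2*(v:ℝ)) := by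
      rw [div_le_iff₀ (by positivity), add_mul, div_mul_cancel₀ _ (by positivity : (2*(v:ℝ)) ≠ 0)]
      nlinarith
    have hC : (0:ℝ) ≤ (Real.sqrt (2 * Real.pi * v))⁻¹ := by positivity
    simp only [hfdef, gaussianPDFReal]
    calc (Real.sqrt (2 * Real.pi * v))⁻¹ * Real.exp (-(x + t - (-δ))^2 / (2*(v:ℝ)))
        ≤ (Real.sqrt (2 * Real.pi * v))⁻¹ * Real.exp (-(ε*δ*r) + -(x - (-δ))^2 / (2*(v:ℝ))) :=
          mul_le_mul_of_nonneg_left (Real.exp_le_exp.mpr hexp) hC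
      _ = Real.exp (-(ε*δ*r)) *
          ((Real.sqrt (2 * Real.pi * v))⁻¹ * Real.exp (-(x - (-δ))^2 / (2*(v:ℝ)))) := by
          rw [Real.exp_add]; ring
  -- change of variables
  have hchg : ∫ x in Set.Ici t, f x = ∫ x in Set.Ici 0, f (x + t) := by
    calc ∫ x in Set.Ici t, f x
        = ∫ x in (fun x : ℝ => x + t) ⁻¹' (Set.Ici t), f (x + t) :=
          ((measurePreserving_add_right volume t).setIntegral_preimage_emb
            (measurableEmbedding_addRight t) f _).symm
      _ = ∫ x in Set.Ici 0, f (x + t) := by rw [Set.preimage_add_const_Ici, sub_self]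
  have hshift : (fun x : ℝ => f (x + t)) = gaussianPDFReal (-δ - t) v :=
    funext fun x => gaussianPDFReal_add x t
  have hint1 : IntegrableOn (fun x : ℝ => f (x + t)) (Set.Ici 0) volume := by
    rw [hshift]; exact (integrable_gaussianPDFReal _ _).integrableOn
  have hint2 : IntegrableOn (fun x : ℝ => Real.exp (-(ε*δ*r)) * f x) (Set.Ici 0) volume :=
    ((integrable_gaussianPDFReal _ _).const_mul _).integrableOn
  have hmono2 : ∫ x in Set.Ici 0, f (x+t) ≤ ∫ x in Set.Ici 0, Real.exp (-(ε*δ*r)) * f x :=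
    setIntegral_mono_on hint1 hint2 measurableSet_Ici (fun x hx => hpoint x hx)
  have hconst : ∫ x in Set.Ici (0:ℝ), Real.exp (-(ε*δ*r)) * f x
      = Real.exp (-(ε*δ*r)) * ∫ x in Set.Ici (0:ℝ), f x := integral_const_mul _ _
  -- measures of zero sets
  have h0 : μ {(0:ℝ)} = 0 :=
    gaussianReal_absolutelyContinuous _ hv (by simp)
  have hIciIoi : μ (Set.Ici (0:ℝ)) = μ (Set.Ioi 0) := by
    rw [← Set.Ioi_union_left]
    exact le_antisymm ((measure_union_le _ _).trans_eq (by rw [h0, add_zero]))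
      (measure_mono Set.subset_union_left)
  have htail : (μ (Set.Ici t)).toReal ≤ Real.exp (-(ε*δ*r)) * (μ (Set.Ioi (0:ℝ))).toReal := by
    have hIoi : (μ (Set.Ioi (0:ℝ))).toReal = ∫ x in Set.Ici (0:ℝ), f x := by
      rw [← hIciIoi, happly]
    rw [happly, hchg, hIoi]
    exact hmono2.trans (le_of_eq hconst)
  -- positivity of the selection probability
  have hpos : 0 < (μ (Set.Ioi (0:ℝ))).toReal := by
    rw [happly]
    rw [setIntegral_pos_iff_support_of_nonneg_ae
      (ae_of_all _ (fun x => gaussianPDFReal_nonneg _ _ x))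
      ((integrable_gaussianPDFReal _ _).integrableOn)]
    have hsupp : Function.support f = Set.univ :=
      Set.eq_univ_of_forall fun x => (gaussianPDFReal_pos _ _ x hv).ne'
    rw [hsupp, Set.univ_inter, Real.volume_Ioi]
    exact ENNReal.zero_lt_top
  -- split
  have hsplit : μ (Set.Ioi (0:ℝ)) = μ (Set.Ioo 0 t) + μ (Set.Ici t) := by
    rw [← Set.Ioo_union_Ici_eq_Ioi ht0]
    exact measure_union
      (Set.disjoint_left.mpr fun x (hx : x ∈ Set.Ioo (0:ℝ) t) hx' => absurd hx.2 (not_lt.mpr hx'))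
      measurableSet_Ici
  -- selection set
  have hSset : {y : ℝ | 0 < r * y} = Set.Ioi (0:ℝ) := by
    ext y
    simp only [Set.mem_setOf_eq, Set.mem_Ioi]
    constructor
    · intro h; by_contra hy; push_neg at hy; nlinarith
    · intro h; exact mul_pos hr0 h
  -- event inclusion
  have hsub : Set.Ioo (0:ℝ) t ⊆ Set.Ioi 0 ∩
      {y : ℝ | δ / 2 < |(y - 1 / ((r * y) * (r * y + 1))) - (-δ)|} := by
    intro y hy
    refine ⟨hy.1, show δ/2 < |(y - 1/((r*y)*(r*y+1))) - (-δ)| from ?_⟩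
    have hy0 : 0 < y := hy.1
    have hyt : y < t := hy.2
    have hs0 : 0 < r * y := mul_pos hr0 hy0
    have hsε : r * y < ε := by rw [← hrt]; exact (mul_lt_mul_iff_right₀ hr0).mpr hyt
    set s := r * y with hsdef
    clear_value s
    have hden : 0 < s * (s+1) := by nlinarith
    have hden2 : s * (s+1) < 2*ε := by nlinarith
    have hcgt : (3*δ+3)/2 < 1 / (s*(s+1)) := by
      rw [lt_div_iff₀ hden]
      nlinarith
    have hyε : y < ε := lt_of_lt_of_le hyt htε
    have hlt : y - 1/(s*(s+1)) - (-δ) < -(δ/2) := by linarith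
    calc δ/2 < -((y - 1/(s*(s+1))) - (-δ)) := by linarith
      _ ≤ |(y - 1/(s*(s+1))) - (-δ)| := neg_le_abs _
  -- conclude
  rw [hSset, cond_apply measurableSet_Ioi, ENNReal.toReal_mul, ENNReal.toReal_inv]
  have h1 : (μ (Set.Ioo (0:ℝ) t)).toReal ≤
      (μ (Set.Ioi (0:ℝ) ∩ {y : ℝ | δ / 2 < |(y - 1 / ((r * y) * (r * y + 1))) - (-δ)|})).toReal :=
    ENNReal.toReal_mono (measure_ne_top μ _) (measure_mono hsub)
  have h2 : (μ (Set.Ioi (0:ℝ))).toReal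
      = (μ (Set.Ioo (0:ℝ) t)).toReal + (μ (Set.Ici t)).toReal := by
    rw [hsplit, ENNReal.toReal_add (measure_ne_top μ _) (measure_ne_top μ _)]
  have h4 : Real.exp (-(ε*δ*r)) * (μ (Set.Ioi (0:ℝ))).toReal
      ≤ 1/2 * (μ (Set.Ioi (0:ℝ))).toReal :=
    mul_le_mul_of_nonneg_right hk hpos.le
  rw [inv_mul_eq_div, le_div_iff₀ hpos]
  linarith

/-- Inconsistency of the nonrandomized approximate selective MLE: if `Ȳ_n ~ N(β*, 1/n)`
with `β* = -δ < 0`, and `β̂*_n = Ȳ_n - 1/(√n Ȳ_n (√n Ȳ_n + 1))`, then conditionally on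
`{√n Ȳ_n > 0}`, `liminf_n P(|β̂*_n - β*| > δ/2 | √n Ȳ_n > 0) > 0`, so `β̂*_n` is not
consistent for `β*` under the selective law. -/
theorem stmt10 (δ : ℝ) (hδ : 0 < δ) (β : ℝ) (hβ : β = -δ) :
    0 < Filter.liminf (fun n : ℕ =>
      (((gaussianReal β (1 / (n : NNReal)))[|{y : ℝ | 0 < Real.sqrt n * y}])
        {y : ℝ | δ / 2 <
          |(y - 1 / ((Real.sqrt n * y) * (Real.sqrt n * y + 1))) - β|}).toReal)
      Filter.atTop := by
  subst hβ
  have h1 : ∀ᶠ n : ℕ in atTop, 1 ≤ n := eventually_ge_atTop 1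
  have h2 : Tendsto (fun n : ℕ => Real.exp (-((3*δ+3)⁻¹ * δ * Real.sqrt n))) atTop (nhds 0) := by
    have ha : Tendsto (fun n : ℕ => (3*δ+3)⁻¹ * δ * Real.sqrt n) atTop atTop := by
      apply Tendsto.const_mul_atTop (by positivity : (0:ℝ) < (3*δ+3)⁻¹ * δ)
      have hs : Tendsto Real.sqrt atTop atTop := by
        rw [tendsto_atTop_atTop]
        intro b
        refine ⟨(max b 0)^2, fun a ha => ?_⟩
        calc b ≤ max b 0 := le_max_left _ _
          _ = Real.sqrt ((max b 0)^2) := (Real.sqrt_sq (le_max_right _ _)).symm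
          _ ≤ Real.sqrt a := Real.sqrt_le_sqrt ha
      exact hs.comp tendsto_natCast_atTop_atTop
    exact Real.tendsto_exp_atBot.comp (tendsto_neg_atTop_atBot.comp ha)
  have h3 : ∀ᶠ n : ℕ in atTop, Real.exp (-((3*δ+3)⁻¹ * δ * Real.sqrt n)) ≤ 1/2 :=
    (h2.eventually_lt_const (by norm_num : (0:ℝ) < 1/2)).mono fun n h => h.le
  have hev : ∀ᶠ n : ℕ in atTop, 1/2 ≤
      (((gaussianReal (-δ) (1 / (n : NNReal)))[|{y : ℝ | 0 < Real.sqrt n * y}])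
        {y : ℝ | δ / 2 <
          |(y - 1 / ((Real.sqrt n * y) * (Real.sqrt n * y + 1))) - (-δ)|}).toReal := by
    filter_upwards [h1, h3] with n hn hkn
    exact key_bound δ hδ n hn hkn
  have hbd : ∀ n : ℕ,
      (((gaussianReal (-δ) (1 / (n : NNReal)))[|{y : ℝ | 0 < Real.sqrt n * y}])
        {y : ℝ | δ / 2 <
          |(y - 1 / ((Real.sqrt n * y) * (Real.sqrt n * y + 1))) - (-δ)|}).toReal ≤ 1 := by
    intro n
    have hS : MeasurableSet {y : ℝ | 0 < Real.sqrt n * y} :=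
      measurableSet_lt measurable_const (measurable_const.mul measurable_id)
    rw [cond_apply hS]
    refine ENNReal.toReal_mono ENNReal.one_ne_top ?_
    calc ((gaussianReal (-δ) (1 / (n : NNReal))) {y : ℝ | 0 < Real.sqrt n * y})⁻¹ *
          (gaussianReal (-δ) (1 / (n : NNReal))) ({y : ℝ | 0 < Real.sqrt n * y} ∩ _)
        ≤ ((gaussianReal (-δ) (1 / (n : NNReal))) {y : ℝ | 0 < Real.sqrt n * y})⁻¹ *
          (gaussianReal (-δ) (1 / (n : NNReal))) {y : ℝ | 0 < Real.sqrt n * y} :=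
          mul_le_mul_right (measure_mono Set.inter_subset_left) _
      _ ≤ 1 := ENNReal.inv_mul_le_one _
  refine lt_of_lt_of_le (by norm_num : (0:ℝ) < 1/2)
    (le_liminf_of_le (isCoboundedUnder_ge_of_eventually_le atTop
      (Eventually.of_forall hbd)) hev)
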